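/- For an instance (G, P) of the K-terminal reliability problem in which every edge failure probability p_e has a finite binary expansion with m_e bits, and with M = Σ_{e∈E} m_e, the unreliability of G satisfies u_G(P) = #F_K(G′) / 2^M, where #F_K(G′) is the projected model count of the formula ψ on the transformed graph G′. -/

import Mathlib

/-- One step along an operational edge: `a` and `b` are the two endpoints of some
edge `e` with `X e = true`. -/
def edgeStep {V E : Type*} (uE vE : E → V) (X : E → Bool) (a b : V) : Prop :=
  ∃ e : E, X e = true ∧ ((uE e = a ∧ vE e = b) ∨ (uE e = b ∧ vE e = a))

/-- `a` and `b` are `X`-connected: reflexive-transitive closure of `edgeStep`. -/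
def xConnected {V E : Type*} (uE vE : E → V) (X : E → Bool) (a b : V) : Prop :=
  Relation.ReflTransGen (edgeStep uE vE X) a b

/-- The state `X` is safe (`Φ(X) = 1`): every pair of terminals is `X`-connected. -/
def safe {V E : Type*} (uE vE : E → V) (K : Finset V) (X : E → Bool) : Prop :=
  ∀ a ∈ K, ∀ b ∈ K, xConnected uE vE X a b

/-- `(X, S)` satisfies the formula `ψ`. -/
def satPsi {V E : Type*} (uE vE : E → V) (K : Finset V) (X : E → Bool) (S : V → Bool) : Prop :=
  (∃ j ∈ K, S j = true) ∧ (∃ k ∈ K, S k = false) ∧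
    ∀ e : E, ((S (uE e) = true ∧ X e = true) → S (vE e) = true) ∧
      ((S (vE e) = true ∧ X e = true) → S (uE e) = true)


open scoped Classical in
/-- The `K`-terminal unreliability of the graph with edge failure probabilities `p`:
`u_G(P) = Σ_X (1 − Φ(X)) · ∏_e p_e^(1−[X e]) (1 − p_e)^[X e]`. -/
noncomputable def unrel {V E : Type*} [Fintype E] [DecidableEq E]
    (uE vE : E → V) (K : Finset V) (p : E → ℝ) : ℝ :=
  ∑ X : E → Bool, (if safe uE vE K X then (0 : ℝ) else 1) *
    ∏ e : E, p e ^ (if X e then 0 else 1) * (1 - p e) ^ (if X e then 1 else 0)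

/-- `z^e_k`: the number of zeros among the first `k` bits `b^e_1, …, b^e_k` of the
binary expansion attached to edge `e` (so `gz be e 0 = 0`). -/
def gz {E : Type*} (be : E → ℕ → Bool) (e : E) (k : ℕ) : ℕ :=
  k - ∑ i ∈ Finset.Icc 1 k, (if be e i then 1 else 0)

/-- Vertices of the transformed graph `G′`: the original vertices together with the
fresh interior gadget vertices `v_1, …, v_{z_{m_e}}` (distinct across gadgets). -/
abbrev Vtrans (V E : Type*) (be : E → ℕ → Bool) (me : E → ℕ) : Type _ :=
  V ⊕ (Σ e : E, Fin (gz be e (me e)))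

/-- The gadget vertex `v_j` of the gadget replacing edge `e`, as a vertex of `G′`:
`v_0` is identified with the endpoint `uE e`, `v_{z_{m_e}+1}` with the endpoint
`vE e`, and `v_1, …, v_{z_{m_e}}` are fresh interior vertices. -/
def gadgetVertex {V E : Type*} (uE vE : E → V) (be : E → ℕ → Bool) (me : E → ℕ)
    (e : E) (j : ℕ) : Vtrans V E be me :=
  if j = 0 then Sum.inl (uE e)
  else if j = gz be e (me e) + 1 then Sum.inl (vE e)
  else if h : j - 1 < gz be e (me e) then Sum.inr ⟨e, ⟨j - 1, h⟩⟩
  else Sum.inl (uE e)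

/-- First endpoint of edge `(e, k)` of `G′` (the edge for bit `k+1` of the gadget
replacing `e`): the gadget vertex `v_{z_k}`. -/
def uTrans {V E : Type*} (uE vE : E → V) (be : E → ℕ → Bool) (me : E → ℕ) :
    (Σ e : E, Fin (me e)) → Vtrans V E be me :=
  fun ek => gadgetVertex uE vE be me ek.1 (gz be ek.1 ek.2.val)

/-- Second endpoint of edge `(e, k)` of `G′`: the gadget vertex `v_{z_m+1}` if bit
`k+1` is one, and `v_{z_{k+1}}` otherwise. -/
def vTrans {V E : Type*} (uE vE : E → V) (be : E → ℕ → Bool) (me : E → ℕ) :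
    (Σ e : E, Fin (me e)) → Vtrans V E be me :=
  fun ek =>
    if be ek.1 (ek.2.val + 1) then gadgetVertex uE vE be me ek.1 (gz be ek.1 (me ek.1) + 1)
    else gadgetVertex uE vE be me ek.1 (gz be ek.1 (ek.2.val + 1))

section GZ
variable {E : Type*} (be : E → ℕ → Bool) (e : E)

lemma gz_zero : gz be e 0 = 0 := by simp [gz]

lemma bitsum_le (k : ℕ) : (∑ i ∈ Finset.Icc 1 k, (if be e i then 1 else 0)) ≤ k := by
  calc (∑ i ∈ Finset.Icc 1 k, (if be e i then 1 else 0))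
      ≤ ∑ i ∈ Finset.Icc 1 k, 1 := Finset.sum_le_sum (by intro i _; split <;> omega)
    _ = k := by simp

lemma gz_succ (k : ℕ) :
    gz be e (k + 1) = if be e (k + 1) then gz be e k else gz be e k + 1 := by
  have h1 := bitsum_le be e k
  have h2 : (∑ i ∈ Finset.Icc 1 (k+1), (if be e i then 1 else 0))
      = (∑ i ∈ Finset.Icc 1 k, (if be e i then 1 else 0)) + (if be e (k+1) then 1 else 0) :=
    Finset.sum_Icc_succ_top (by omega) _
  unfold gz
  rw [h2]
  by_cases hb : be e (k+1) = true <;>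
    simp only [hb, if_true, if_false, Bool.false_eq_true] <;> omega

lemma gz_mono : Monotone (gz be e) := by
  have h : ∀ k, gz be e k ≤ gz be e (k+1) := by
    intro k; rw [gz_succ]; split <;> omega
  exact monotone_nat_of_le_succ h

lemma gz_succ_true {k : ℕ} (h : be e (k+1) = true) : gz be e (k+1) = gz be e k := by
  rw [gz_succ, if_pos h]

lemma gz_succ_false {k : ℕ} (h : be e (k+1) = false) : gz be e (k+1) = gz be e k + 1 := by
  rw [gz_succ, h]; simp

/-- zeros positions are determined by their z-value -/
lemma gz_inj_zero {k k' : ℕ} (hk : be e (k+1) = false) (hk' : be e (k'+1) = false)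
    (h : gz be e (k+1) = gz be e (k'+1)) : k = k' := by
  rcases lt_trichotomy k k' with hlt | heq | hgt
  · exfalso
    have h1 : gz be e (k+1) ≤ gz be e k' := gz_mono be e (by omega)
    rw [gz_succ_false be e hk'] at h
    omega
  · exact heq
  · exfalso
    have h1 : gz be e (k'+1) ≤ gz be e k := gz_mono be e (by omega)
    rw [gz_succ_false be e hk] at h
    omega

end GZ

section PsiSafe
variable {V E : Type*} (uE vE : E → V) (K : Finset V) (X : E → Bool)

lemma step_preserve {S : V → Bool}
    (hedge : ∀ e : E, ((S (uE e) = true ∧ X e = true) → S (vE e) = true) ∧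
      ((S (vE e) = true ∧ X e = true) → S (uE e) = true))
    {a b : V} (h : xConnected uE vE X a b) (ha : S a = true) : S b = true := by
  induction h with
  | refl => exact ha
  | tail _ hstep ih =>
    obtain ⟨e, hXe, hends⟩ := hstep
    rcases hends with ⟨hu, hv⟩ | ⟨hu, hv⟩
    · rw [← hv]; exact (hedge e).1 ⟨by rw [hu]; exact ih, hXe⟩
    · rw [← hu]; exact (hedge e).2 ⟨by rw [hv]; exact ih, hXe⟩

lemma exists_satPsi_iff_not_safe :
    (∃ S : V → Bool, satPsi uE vE K X S) ↔ ¬ safe uE vE K X := by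
  constructor
  · rintro ⟨S, ⟨j, hj, hjT⟩, ⟨k, hk, hkF⟩, hedge⟩ hsafe
    have := step_preserve uE vE X hedge (hsafe j hj k hk) hjT
    rw [hkF] at this; exact Bool.false_ne_true this
  · intro hsafe
    simp only [safe, not_forall] at hsafe
    obtain ⟨a, ha, b, hb, hnc⟩ := hsafe
    classical
    refine ⟨fun v => decide (xConnected uE vE X a v),
      ⟨a, ha, decide_eq_true Relation.ReflTransGen.refl⟩,
      ⟨b, hb, by simp [hnc]⟩, ?_⟩
    intro e
    constructor
    · rintro ⟨hu, hXe⟩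
      simp only [decide_eq_true_eq] at hu ⊢
      exact hu.tail ⟨e, hXe, Or.inl ⟨rfl, rfl⟩⟩
    · rintro ⟨hv, hXe⟩
      simp only [decide_eq_true_eq] at hv ⊢
      exact hv.tail ⟨e, hXe, Or.inr ⟨rfl, rfl⟩⟩

end PsiSafe

section ConnP

/-- The gadget with bits `b 1, …, b m` connects its endpoints under edge state `Y`. -/
def connP (m : ℕ) (b : ℕ → Bool) (Y : Fin m → Bool) : Prop :=
  ∃ k : Fin m, b (k.1 + 1) = true ∧ Y k = true ∧
    ∀ j : Fin m, j < k → b (j.1 + 1) = false → Y j = true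

instance connP.dec (m : ℕ) (b : ℕ → Bool) (Y : Fin m → Bool) : Decidable (connP m b Y) := by
  unfold connP; infer_instance

lemma connP_zero (b : ℕ → Bool) (Y : Fin 0 → Bool) : ¬ connP 0 b Y := by
  rintro ⟨k, -⟩; exact k.elim0

lemma connP_succ (m : ℕ) (b : ℕ → Bool) (y : Bool) (Y : Fin m → Bool) :
    connP (m+1) b (Fin.cons y Y) ↔
      (if b 1 then (y = true ∨ connP m (fun i => b (i+1)) Y)
       else (y = true ∧ connP m (fun i => b (i+1)) Y)) := by
  constructor
  · rintro ⟨k, hb, hY, hpre⟩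
    rcases Fin.eq_zero_or_eq_succ k with h0 | ⟨j, hj⟩
    · subst h0
      simp only [Fin.val_zero, zero_add] at hb
      rw [if_pos hb]
      left
      simpa using hY
    · subst hj
      have htail : connP m (fun i => b (i+1)) Y := by
        refine ⟨j, ?_, ?_, ?_⟩
        · simpa [Nat.add_comm] using hb
        · simpa using hY
        · intro i hi hbi
          have := hpre i.succ (by simpa using hi) (by simpa [Nat.add_comm] using hbi)
          simpa using this
      by_cases hb1 : b 1 = true
      · rw [if_pos hb1]; right; exact htail
      · rw [if_neg hb1]
        refine ⟨?_, htail⟩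
        have := hpre 0 (Fin.succ_pos j) (by simpa using Bool.eq_false_iff.mpr hb1)
        simpa using this
  · intro h
    by_cases hb1 : b 1 = true
    · rw [if_pos hb1] at h
      rcases h with hy | ⟨j, hb, hY, hpre⟩
      · exact ⟨0, by simpa using hb1, by simpa using hy, fun i hi _ => absurd hi (by simp)⟩
      · refine ⟨j.succ, by simpa using hb, by simpa using hY, ?_⟩
        intro i hi hbi
        rcases Fin.eq_zero_or_eq_succ i with h0 | ⟨i', hi'⟩
        · subst h0; simp at hbi; rw [hbi] at hb1; exact absurd hb1 (by simp)
        · subst hi'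
          have := hpre i' (by simpa using hi) (by simpa [Nat.add_comm] using hbi)
          simpa using this
    · rw [if_neg hb1] at h
      obtain ⟨hy, j, hb, hY, hpre⟩ := h
      refine ⟨j.succ, by simpa using hb, by simpa using hY, ?_⟩
      intro i hi hbi
      rcases Fin.eq_zero_or_eq_succ i with h0 | ⟨i', hi'⟩
      · subst h0; simpa using hy
      · subst hi'
        have := hpre i' (by simpa using hi) (by simpa [Nat.add_comm] using hbi)
        simpa using this

end ConnP

section Count

lemma card_prod_and {β : Type*} (C : β → Prop) :
    Nat.card {p : Bool × β // p.1 = true ∧ C p.2} = Nat.card {y : β // C y} := by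
  apply Nat.card_congr
  refine ⟨fun p => ⟨p.1.2, p.2.2⟩, fun y => ⟨(true, y.1), rfl, y.2⟩, ?_, ?_⟩
  · rintro ⟨⟨b, y⟩, hb, hc⟩
    simp only at hb
    subst hb
    rfl
  · rintro ⟨y, hc⟩; rfl

lemma card_prod_or {β : Type*} [Fintype β] (C : β → Prop) :
    Nat.card {p : Bool × β // p.1 = true ∨ C p.2}
      = Fintype.card β + Nat.card {y : β // C y} := by
  classical
  have e : {p : Bool × β // p.1 = true ∨ C p.2} ≃ β ⊕ {y : β // C y} := by
    refine ⟨fun p => if h : p.1.1 = true then Sum.inl p.1.2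
        else Sum.inr ⟨p.1.2, p.2.resolve_left h⟩,
      fun s => Sum.elim (fun y => ⟨(true, y), Or.inl rfl⟩)
        (fun y => ⟨(false, y.1), Or.inr y.2⟩) s, ?_, ?_⟩
    · rintro ⟨⟨b, y⟩, h⟩
      cases b <;> simp
    · rintro (y | ⟨y, hy⟩)
      · simp
      · simp
  rw [Nat.card_congr e, Nat.card_sum, Nat.card_eq_fintype_card]

lemma sum_Icc_shift (m : ℕ) (f : ℕ → ℕ) :
    ∑ k ∈ Finset.Icc 1 (m+1), f k = f 1 + ∑ k ∈ Finset.Icc 1 m, f (k+1) := by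
  induction m with
  | zero => simp
  | succ n ih =>
    rw [Finset.sum_Icc_succ_top (by omega), ih, Finset.sum_Icc_succ_top (by omega)]
    ring

lemma card_connP (m : ℕ) (b : ℕ → Bool) :
    Nat.card {Y : Fin m → Bool // connP m b Y}
      = ∑ k ∈ Finset.Icc 1 m, if b k then 2^(m-k) else 0 := by
  induction m generalizing b with
  | zero =>
    have : IsEmpty {Y : Fin 0 → Bool // connP 0 b Y} := ⟨fun p => connP_zero b p.1 p.2⟩
    simp [Nat.card_of_isEmpty]
  | succ m ih =>
    have e1 : {p : Bool × (Fin m → Bool) //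
          if b 1 then (p.1 = true ∨ connP m (fun i => b (i+1)) p.2)
          else (p.1 = true ∧ connP m (fun i => b (i+1)) p.2)}
        ≃ {Y : Fin (m+1) → Bool // connP (m+1) b Y} := by
      refine (Fin.consEquiv (fun _ => Bool)).subtypeEquiv (fun p => ?_)
      exact (connP_succ m b p.1 p.2).symm
    rw [← Nat.card_congr e1, sum_Icc_shift]
    have hsum : ∑ k ∈ Finset.Icc 1 m, (if b (k+1) then 2^(m+1-(k+1)) else 0)
        = ∑ k ∈ Finset.Icc 1 m, (if (fun i => b (i+1)) k then 2^(m-k) else 0) := by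
      apply Finset.sum_congr rfl
      intro k hk
      simp only [Nat.succ_sub_succ]
    rw [hsum, ← ih (fun i => b (i+1))]
    by_cases hb1 : b 1 = true
    · simp only [hb1, if_true]
      rw [card_prod_or]
      simp [Fintype.card_fun]
    · simp only [hb1, if_false, Bool.false_eq_true]
      rw [card_prod_and]
      simp [Bool.eq_false_iff.mpr hb1]

end Count

section Transfer
set_option linter.unusedSectionVars false
variable {V E : Type*} [DecidableEq V] [DecidableEq E] (uE vE : E → V) (be : E → ℕ → Bool) (me : E → ℕ)

lemma gv_zero (e : E) : gadgetVertex uE vE be me e 0 = Sum.inl (uE e) := if_pos rfl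

lemma gv_hub (e : E) :
    gadgetVertex uE vE be me e (gz be e (me e) + 1) = Sum.inl (vE e) := by
  unfold gadgetVertex
  rw [if_neg (by omega), if_pos rfl]

lemma gv_mid (e : E) (j : ℕ) (h1 : 1 ≤ j) (h2 : j ≤ gz be e (me e)) :
    gadgetVertex uE vE be me e j = Sum.inr ⟨e, ⟨j - 1, by omega⟩⟩ := by
  unfold gadgetVertex
  rw [if_neg (by omega), if_neg (by omega), dif_pos (by omega)]

/-- The state of the gadget replacing `e`. -/
def Ye (X' : (Σ e : E, Fin (me e)) → Bool) (e : E) : Fin (me e) → Bool :=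
  fun k => X' ⟨e, k⟩

/-- The induced edge state on the original graph. -/
def gXind (X' : (Σ e : E, Fin (me e)) → Bool) : E → Bool :=
  fun e => decide (connP (me e) (be e) (Ye me X' e))

/-- The first `i` chain edges of the gadget replacing `e` are all operational. -/
def reach0 (X' : (Σ e : E, Fin (me e)) → Bool) (e : E) (i : ℕ) : Prop :=
  ∀ k : Fin (me e), be e (k.1 + 1) = false → gz be e (k.1 + 1) ≤ i → X' ⟨e, k⟩ = true

lemma reach0_zero (X' : (Σ e : E, Fin (me e)) → Bool) (e : E) : reach0 be me X' e 0 := by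
  intro k hk hle
  rw [gz_succ_false be e hk] at hle
  omega

lemma reach0_mono (X' : (Σ e : E, Fin (me e)) → Bool) (e : E) {i i' : ℕ} (h : i ≤ i')
    (hr : reach0 be me X' e i') : reach0 be me X' e i :=
  fun k hk hle => hr k hk (le_trans hle h)

open Classical in
/-- Extension of a vertex assignment `S` on `G` to the transformed graph. -/
noncomputable def Sext (X' : (Σ e : E, Fin (me e)) → Bool) (S : V → Bool) :
    Vtrans V E be me → Bool :=
  Sum.elim S (fun q => if reach0 be me X' q.1 (q.2.1 + 1) then S (uE q.1) else S (vE q.1))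

lemma Sext_inl (X' : (Σ e : E, Fin (me e)) → Bool) (S : V → Bool) (v : V) :
    Sext uE vE be me X' S (Sum.inl v) = S v := rfl

open Classical in
lemma Sext_gv (X' : (Σ e : E, Fin (me e)) → Bool) (S : V → Bool) (e : E) (j : ℕ)
    (hj : j ≤ me e) :
    Sext uE vE be me X' S (gadgetVertex uE vE be me e (gz be e j))
      = if reach0 be me X' e (gz be e j) then S (uE e) else S (vE e) := by
  by_cases h0 : gz be e j = 0
  · rw [h0, gv_zero, if_pos (reach0_zero be me X' e), Sext_inl]
  · have hle : gz be e j ≤ gz be e (me e) := gz_mono be e hj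
    rw [gv_mid uE vE be me e _ (by omega) hle]
    show (if reach0 be me X' e (gz be e j - 1 + 1) then S (uE e) else S (vE e)) = _
    have : gz be e j - 1 + 1 = gz be e j := by omega
    rw [this]

lemma edge_eq_of_imp {A B : Bool} (h1 : A = true → B = true) (h2 : B = true → A = true) :
    A = B := by
  cases A <;> cases B <;> simp_all

variable (K : Finset V)

lemma transfer_forward (X' : (Σ e : E, Fin (me e)) → Bool) (S : V → Bool)
    (hS : satPsi uE vE K (gXind be me X') S) :
    satPsi (uTrans uE vE be me) (vTrans uE vE be me) (K.image Sum.inl) X'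
      (Sext uE vE be me X' S) := by
  classical
  obtain ⟨⟨j, hj, hjT⟩, ⟨k, hk, hkF⟩, hedge⟩ := hS
  refine ⟨⟨Sum.inl j, Finset.mem_image_of_mem _ hj, hjT⟩,
    ⟨Sum.inl k, Finset.mem_image_of_mem _ hk, hkF⟩, ?_⟩
  intro ek
  suffices h : X' ek = true →
      Sext uE vE be me X' S (uTrans uE vE be me ek)
        = Sext uE vE be me X' S (vTrans uE vE be me ek) by
    constructor
    · rintro ⟨h1, h2⟩; rw [← h h2]; exact h1
    · rintro ⟨h1, h2⟩; rw [h h2]; exact h1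
  intro hX
  obtain ⟨e, kk⟩ := ek
  have hkle : (kk : ℕ) ≤ me e := le_of_lt kk.2
  have hu : Sext uE vE be me X' S (uTrans uE vE be me ⟨e, kk⟩)
      = if reach0 be me X' e (gz be e kk.1) then S (uE e) else S (vE e) :=
    Sext_gv uE vE be me X' S e kk.1 hkle
  by_cases hb : be e (kk.1 + 1) = true
  · have hv : vTrans uE vE be me ⟨e, kk⟩ = Sum.inl (vE e) := by
      unfold vTrans
      rw [if_pos hb, gv_hub]
    rw [hv, Sext_inl, hu]
    by_cases hSuv : S (uE e) = S (vE e)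
    · split <;> [exact hSuv; rfl]
    · have hgX : gXind be me X' e = false := by
        by_contra hcon
        rw [Bool.not_eq_false] at hcon
        have h1 := (hedge e).1
        have h2 := (hedge e).2
        rw [hcon] at h1 h2
        cases hSu : S (uE e) <;> cases hSv : S (vE e) <;> simp_all
      have hnc : ¬ connP (me e) (be e) (Ye me X' e) := by
        simpa [gXind] using hgX
      have hwit : ∃ jj : Fin (me e), jj < kk ∧ be e (jj.1 + 1) = false ∧ X' ⟨e, jj⟩ = false := by
        by_contra hcon
        push_neg at hcon
        refine hnc ⟨kk, hb, hX, ?_⟩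
        intro jj hjj hbj
        have h2 := hcon jj hjj hbj
        show X' ⟨e, jj⟩ = true
        simpa using h2
      obtain ⟨jj, hjlt, hbj, hXj⟩ := hwit
      have hnr : ¬ reach0 be me X' e (gz be e kk.1) := by
        intro hr
        have hle : gz be e (jj.1 + 1) ≤ gz be e kk.1 := gz_mono be e (by
          have : (jj : ℕ) < (kk : ℕ) := hjlt
          omega)
        have := hr jj hbj hle
        rw [hXj] at this
        exact Bool.false_ne_true this
      rw [if_neg hnr]
  · have hb' : be e (kk.1 + 1) = false := by simpa using hb
    have hv : vTrans uE vE be me ⟨e, kk⟩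
        = gadgetVertex uE vE be me e (gz be e (kk.1 + 1)) := by
      unfold vTrans
      rw [if_neg (by simp [hb'])]
    rw [hv, hu, Sext_gv uE vE be me X' S e (kk.1 + 1) (by omega)]
    have hiff : reach0 be me X' e (gz be e kk.1) ↔ reach0 be me X' e (gz be e (kk.1 + 1)) := by
      rw [gz_succ_false be e hb']
      constructor
      · intro hr k' hbk' hlek'
        rcases Nat.lt_or_ge (gz be e (k'.1 + 1)) (gz be e kk.1 + 1) with hlt | hge
        · exact hr k' hbk' (by omega)
        · have heq : gz be e (k'.1 + 1) = gz be e (kk.1 + 1) := by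
            rw [gz_succ_false be e hb']; omega
          have : (k' : ℕ) = (kk : ℕ) := gz_inj_zero be e hbk' hb' heq
          have hkkeq : k' = kk := Fin.ext this
          rw [hkkeq]
          exact hX
      · exact fun hr => reach0_mono be me X' e (by omega) hr
    exact if_congr hiff rfl rfl

lemma transfer_backward (X' : (Σ e : E, Fin (me e)) → Bool) (S' : Vtrans V E be me → Bool)
    (hS' : satPsi (uTrans uE vE be me) (vTrans uE vE be me) (K.image Sum.inl) X' S') :
    satPsi uE vE K (gXind be me X') (fun v => S' (Sum.inl v)) := by
  obtain ⟨⟨j', hj', hjT⟩, ⟨k', hk', hkF⟩, hedge⟩ := hS'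
  refine ⟨?_, ?_, ?_⟩
  · obtain ⟨j, hj, rfl⟩ := Finset.mem_image.mp hj'
    exact ⟨j, hj, hjT⟩
  · obtain ⟨k, hk, rfl⟩ := Finset.mem_image.mp hk'
    exact ⟨k, hk, hkF⟩
  · intro e
    suffices h : gXind be me X' e = true → S' (Sum.inl (uE e)) = S' (Sum.inl (vE e)) by
      constructor
      · rintro ⟨h1, h2⟩
        show S' (Sum.inl (vE e)) = true
        rw [← h h2]; exact h1
      · rintro ⟨h1, h2⟩
        show S' (Sum.inl (uE e)) = true
        rw [h h2]; exact h1
    intro hgX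
    have hc : connP (me e) (be e) (Ye me X' e) := by simpa [gXind] using hgX
    obtain ⟨k, hbk, hYk, hpre⟩ := hc
    have chain : ∀ j, j ≤ (k : ℕ) →
        S' (gadgetVertex uE vE be me e (gz be e j)) = S' (Sum.inl (uE e)) := by
      intro j
      induction j with
      | zero => intro _; rw [gz_zero, gv_zero]
      | succ i ih =>
        intro hik
        by_cases hb : be e (i + 1) = true
        · rw [gz_succ_true be e hb]
          exact ih (by omega)
        · have hb' : be e (i + 1) = false := by simpa using hb
          rw [← ih (by omega)]
          have hiFin : i < me e := by have := k.2; omega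
          have hY : X' ⟨e, ⟨i, hiFin⟩⟩ = true := by
            have := hpre ⟨i, hiFin⟩ (by rw [Fin.lt_def]; show i < (k : ℕ); omega) hb'
            simpa [Ye] using this
          have hcon := hedge ⟨e, ⟨i, hiFin⟩⟩
          have heq : S' (uTrans uE vE be me ⟨e, ⟨i, hiFin⟩⟩)
              = S' (vTrans uE vE be me ⟨e, ⟨i, hiFin⟩⟩) :=
            edge_eq_of_imp (fun h => hcon.1 ⟨h, hY⟩) (fun h => hcon.2 ⟨h, hY⟩)
          have hvT : vTrans uE vE be me ⟨e, ⟨i, hiFin⟩⟩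
              = gadgetVertex uE vE be me e (gz be e (i + 1)) := by
            unfold vTrans
            rw [if_neg (by simp [hb'])]
          rw [← hvT, ← heq]
          rfl
    have hY : X' ⟨e, k⟩ = true := by simpa [Ye] using hYk
    have hcon := hedge ⟨e, k⟩
    have heq : S' (uTrans uE vE be me ⟨e, k⟩) = S' (vTrans uE vE be me ⟨e, k⟩) :=
      edge_eq_of_imp (fun h => hcon.1 ⟨h, hY⟩) (fun h => hcon.2 ⟨h, hY⟩)
    have hvT : vTrans uE vE be me ⟨e, k⟩ = Sum.inl (vE e) := by
      unfold vTrans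
      rw [if_pos hbk, gv_hub]
    have huT : S' (uTrans uE vE be me ⟨e, k⟩) = S' (Sum.inl (uE e)) := chain k.1 le_rfl
    rw [← huT, heq, hvT]

lemma exists_satPsi_trans_iff (X' : (Σ e : E, Fin (me e)) → Bool) :
    (∃ S' : Vtrans V E be me → Bool,
        satPsi (uTrans uE vE be me) (vTrans uE vE be me) (K.image Sum.inl) X' S')
      ↔ ¬ safe uE vE K (gXind be me X') := by
  rw [← exists_satPsi_iff_not_safe]
  constructor
  · rintro ⟨S', hS'⟩
    exact ⟨_, transfer_backward uE vE be me K X' S' hS'⟩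
  · rintro ⟨S, hS⟩
    exact ⟨_, transfer_forward uE vE be me K X' S hS⟩

end Transfer

section Assemble
variable {E : Type*} (be : E → ℕ → Bool) (me : E → ℕ)

/-- Induced edge state, in curried form. -/
def gW (W : ∀ e : E, Fin (me e) → Bool) : E → Bool :=
  fun e => decide (connP (me e) (be e) (W e))

/-- Number of gadget states with given connectivity status. -/
noncomputable def cnt (e : E) (b : Bool) : ℕ :=
  Nat.card {Y : Fin (me e) → Bool // decide (connP (me e) (be e) Y) = b}

lemma cnt_true (e : E) :
    cnt be me e true = ∑ k ∈ Finset.Icc 1 (me e), if be e k then 2 ^ (me e - k) else 0 := by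
  rw [← card_connP (me e) (be e)]
  exact Nat.card_congr (Equiv.subtypeEquivRight (fun Y => by simp))

lemma cnt_false (e : E) : cnt be me e false = 2 ^ (me e) - cnt be me e true := by
  classical
  have h1 : cnt be me e false = Fintype.card {Y : Fin (me e) → Bool // ¬ connP (me e) (be e) Y} := by
    rw [cnt, Nat.card_eq_fintype_card]
    exact Fintype.card_congr (Equiv.subtypeEquivRight (fun Y => by simp))
  have h2 : cnt be me e true = Fintype.card {Y : Fin (me e) → Bool // connP (me e) (be e) Y} := by
    rw [cnt, Nat.card_eq_fintype_card]
    exact Fintype.card_congr (Equiv.subtypeEquivRight (fun Y => by simp))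
  rw [h1, h2, Fintype.card_subtype_compl]
  congr 1
  simp [Fintype.card_fun]

lemma cnt_true_le (e : E) : cnt be me e true ≤ 2 ^ (me e) := by
  classical
  rw [cnt, Nat.card_eq_fintype_card]
  calc Fintype.card {Y : Fin (me e) → Bool // decide (connP (me e) (be e) Y) = true}
      ≤ Fintype.card (Fin (me e) → Bool) := Fintype.card_subtype_le _
    _ = 2 ^ (me e) := by simp [Fintype.card_fun]

end Assemble

section Main
variable {V E : Type*} [Fintype V] [Fintype E] [DecidableEq V] [DecidableEq E]

open Classical in
lemma count_unsafe (uE vE : E → V) (K : Finset V) (be : E → ℕ → Bool) (me : E → ℕ) :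
    Nat.card {W : ∀ e : E, Fin (me e) → Bool // ¬ safe uE vE K (gW be me W)}
      = ∑ X : E → Bool, if safe uE vE K X then 0 else ∏ e : E, cnt be me e (X e) := by
  classical
  rw [Nat.card_eq_fintype_card, Fintype.card_subtype]
  rw [Finset.card_eq_sum_card_fiberwise
    (f := gW be me) (t := Finset.univ.filter (fun X => ¬ safe uE vE K X))
    (fun W hW => by
      simp only [Finset.mem_coe, Finset.mem_filter, Finset.mem_univ, true_and] at hW ⊢
      exact hW)]
  rw [Finset.sum_filter]
  apply Finset.sum_congr rfl
  intro X _
  by_cases hs : safe uE vE K X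
  · simp [hs]
  · simp only [hs, not_false_iff, if_true, if_false]
    have hset : (Finset.univ.filter (fun W : ∀ e : E, Fin (me e) → Bool =>
          ¬ safe uE vE K (gW be me W))).filter (fun W => gW be me W = X)
        = Finset.univ.filter (fun W => gW be me W = X) := by
      rw [Finset.filter_filter]
      apply Finset.filter_congr
      intro W _
      constructor
      · exact fun h => h.2
      · exact fun h => ⟨by rw [h]; exact hs, h⟩
    rw [hset]
    rw [← Fintype.card_subtype]
    have e0 : ∀ W : ∀ e : E, Fin (me e) → Bool,
        gW be me W = X ↔ ∀ e : E, decide (connP (me e) (be e) (W e)) = X e :=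
      fun W => funext_iff
    have e1 : {W : ∀ e : E, Fin (me e) → Bool // gW be me W = X}
        ≃ ∀ e : E, {Y : Fin (me e) → Bool // decide (connP (me e) (be e) Y) = X e} :=
      Equiv.trans (Equiv.subtypeEquivRight e0)
        (Equiv.subtypePiEquivPi (p := fun e Y => decide (connP (me e) (be e) Y) = X e))
    rw [Fintype.card_congr e1, Fintype.card_pi]
    apply Finset.prod_congr rfl
    intro e _
    rw [cnt, Nat.card_eq_fintype_card]

end Main


/-- for an instance `(G, P)` in which every edge failure probability
`p_e` has a finite binary expansion with `m_e` bits, and with `M = Σ_e m_e`, the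
unreliability of `G` satisfies `u_G(P) = #F_K(G′) / 2^M`, where `#F_K(G′)` is the
projected model count of `ψ` on the transformed graph `G′`. -/
theorem stmt5 {V E : Type*} [Fintype V] [Fintype E] [DecidableEq V] [DecidableEq E]
    (uE vE : E → V) (K : Finset V) (hK : 2 ≤ K.card)
    (p : E → ℝ) (hp : ∀ e, p e ∈ Set.Ioo (0 : ℝ) 1)
    (me : E → ℕ) (be : E → ℕ → Bool)
    (hbits : ∀ e, 1 - p e
      = ∑ k ∈ Finset.Icc 1 (me e), (if be e k then ((1 : ℝ)/2) ^ k else 0)) :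
    unrel uE vE K p
      = (Nat.card {X : (Σ e : E, Fin (me e)) → Bool //
            ∃ S : Vtrans V E be me → Bool,
              satPsi (uTrans uE vE be me) (vTrans uE vE be me) (K.image Sum.inl) X S} : ℝ)
          / 2 ^ (∑ e : E, me e) := by
  classical
  -- Step 1: simplify the definition of unreliability
  have hL : unrel uE vE K p
      = ∑ X : E → Bool, (if safe uE vE K X then (0:ℝ) else 1)
          * ∏ e : E, (if X e then 1 - p e else p e) := by
    unfold unrel
    refine Finset.sum_congr rfl fun X _ => ?_
    congr 1
    refine Finset.prod_congr rfl fun e _ => ?_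
    cases h : X e <;> simp [h]
  -- Step 2: cast of the gadget-state counts
  have hcast : ∀ (e : E) (b : Bool),
      (cnt be me e b : ℝ) = (if b then 1 - p e else p e) * 2 ^ (me e) := by
    intro e b
    have hBe : ((cnt be me e true : ℕ) : ℝ) = (1 - p e) * 2 ^ (me e) := by
      rw [cnt_true, hbits e]
      push_cast
      rw [Finset.sum_mul]
      apply Finset.sum_congr rfl
      intro k hk
      simp only [Finset.mem_Icc] at hk
      by_cases hb : be e k = true
      · simp only [hb, if_true]
        have h2 : (2:ℝ) ^ (me e - k) * 2 ^ k = 2 ^ (me e) := by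
          rw [← pow_add]; congr 1; omega
        rw [div_pow, one_pow]
        have h3 : (2:ℝ) ^ k ≠ 0 := by positivity
        field_simp
        linarith [h2]
      · simp [hb]
    cases b
    · simp only [if_false, Bool.false_eq_true]
      rw [cnt_false]
      have hle := cnt_true_le be me e
      push_cast [Nat.cast_sub hle]
      rw [hBe]
      push_cast
      ring
    · simpa using hBe
  -- Step 3: the model count as a sum over original edge states
  have eA : {X : (Σ e : E, Fin (me e)) → Bool //
        ∃ S : Vtrans V E be me → Bool,
          satPsi (uTrans uE vE be me) (vTrans uE vE be me) (K.image Sum.inl) X S}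
      ≃ {X : (Σ e : E, Fin (me e)) → Bool // ¬ safe uE vE K (gXind be me X)} :=
    Equiv.subtypeEquivRight (fun X => exists_satPsi_trans_iff uE vE be me K X)
  have eB : {X : (Σ e : E, Fin (me e)) → Bool // ¬ safe uE vE K (gXind be me X)}
      ≃ {W : ∀ e : E, Fin (me e) → Bool // ¬ safe uE vE K (gW be me W)} :=
    (Equiv.piCurry fun (e : E) (_ : Fin (me e)) => Bool).subtypeEquiv (fun X' => Iff.rfl)
  have hR : (Nat.card {X : (Σ e : E, Fin (me e)) → Bool //
        ∃ S : Vtrans V E be me → Bool,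
          satPsi (uTrans uE vE be me) (vTrans uE vE be me) (K.image Sum.inl) X S} : ℝ)
      = ∑ X : E → Bool, (if safe uE vE K X then (0:ℝ) else 1)
          * ∏ e : E, (cnt be me e (X e) : ℝ) := by
    rw [Nat.card_congr (eA.trans eB), count_unsafe uE vE K be me]
    push_cast
    apply Finset.sum_congr rfl
    intro X _
    by_cases hs : safe uE vE K X <;> simp [hs]
  rw [hL, hR, Finset.sum_div]
  apply Finset.sum_congr rfl
  intro X _
  by_cases hs : safe uE vE K X
  · simp [hs]
  · simp only [hs, if_false, one_mul]
    have h2M : (2:ℝ) ^ (∑ e : E, me e) = ∏ e : E, (2:ℝ) ^ (me e) :=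
      (Finset.prod_pow_eq_pow_sum _ _ _).symm
    rw [h2M, ← Finset.prod_div_distrib]
    apply Finset.prod_congr rfl
    intro e _
    rw [hcast e (X e)]
    have h3 : (2:ℝ) ^ (me e) ≠ 0 := by positivity
    field_simp
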